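/- Let 0 < d < s, let X and Y be independent random variables each uniformly distributed on [0,s], let r ∈ (0,1) and α ∈ (0,1), and set R = (1−r)X + rY − d and K = s·√(2r(1−r)(1−α)). If K ≤ (1−r)s and K ≤ rs, then P(R ≤ −(d − K)) = 1 − α; that is, VaR_α(R) = d − s·√(2r(1−r)(1−α)). (The middle case of Lemma 3.2.) -/

import Mathlib

open MeasureTheory ProbabilityTheory Set

/-- The uniform probability distribution on the interval `[0, s]`. -/
noncomputable def uniformOnIcc (s : ℝ) : Measure ℝ :=
  (ENNReal.ofReal s)⁻¹ • (volume.restrict (Icc (0 : ℝ) s))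

lemma aux_prod_smul_smul (c : ENNReal) (μ ν : Measure ℝ) [SFinite μ] [SFinite ν] :
    ((c • μ).prod (c • ν)) = (c * c) • (μ.prod ν) := by
  ext S hS
  rw [Measure.prod_apply hS, Measure.smul_apply, Measure.prod_apply hS,
    lintegral_smul_measure]
  simp only [Measure.smul_apply, smul_eq_mul]
  rw [lintegral_const_mul _ (measurable_measure_prodMk_left hS)]
  ring

/-- middle case of Lemma 3.2: with `R = (1-r)X + rY - d` and
`K = s·√(2r(1-r)(1-α))`, if `K ≤ (1-r)s` and `K ≤ rs` then `P(R ≤ -(d - K)) = 1 - α`,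
i.e. `VaR_α(R) = d - s·√(2r(1-r)(1-α))`. -/
theorem var_of_diversified_position_middle_case
    {Ω : Type*} [MeasurableSpace Ω] (P : Measure Ω) [IsProbabilityMeasure P]
    (s d : ℝ) (hd : 0 < d) (hds : d < s)
    (X Y : Ω → ℝ) (hXm : Measurable X) (hYm : Measurable Y)
    (hX : P.map X = uniformOnIcc s) (hY : P.map Y = uniformOnIcc s)
    (hXY : IndepFun X Y P)
    (r : ℝ) (hr : r ∈ Ioo (0 : ℝ) 1) (α : ℝ) (hα : α ∈ Ioo (0 : ℝ) 1)
    (hK1 : s * Real.sqrt (2 * r * (1 - r) * (1 - α)) ≤ (1 - r) * s)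
    (hK2 : s * Real.sqrt (2 * r * (1 - r) * (1 - α)) ≤ r * s) :
    P {ω | (1 - r) * X ω + r * Y ω - d
        ≤ -(d - s * Real.sqrt (2 * r * (1 - r) * (1 - α)))}
      = ENNReal.ofReal (1 - α) := by
  obtain ⟨hr0, hr1⟩ := hr
  obtain ⟨hα0, hα1⟩ := hα
  have hs : 0 < s := hd.trans hds
  have hr1' : 0 < 1 - r := by linarith
  have hα1' : 0 < 1 - α := by linarith
  set K := s * Real.sqrt (2 * r * (1 - r) * (1 - α)) with hKdef
  have hKnn : 0 ≤ K := mul_nonneg hs.le (Real.sqrt_nonneg _)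
  have hKsq : K ^ 2 = s ^ 2 * (2 * r * (1 - r) * (1 - α)) := by
    rw [hKdef, mul_pow, Real.sq_sqrt (by positivity)]
  clear_value K
  -- the half-plane set
  set S : Set (ℝ × ℝ) := {p : ℝ × ℝ | (1 - r) * p.1 + r * p.2 ≤ K} with hSdef
  have hSm : MeasurableSet S := by
    apply measurableSet_le
    · fun_prop
    · exact measurable_const
  have hset : {ω | (1 - r) * X ω + r * Y ω - d ≤ -(d - K)}
      = (fun ω => (X ω, Y ω)) ⁻¹' S := by
    ext ω
    simp only [hSdef, mem_setOf_eq, mem_preimage]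
    constructor <;> intro h <;> linarith
  rw [hset, ← Measure.map_apply (hXm.prodMk hYm) hSm,
    (indepFun_iff_map_prod_eq_prod_map_map hXm.aemeasurable hYm.aemeasurable).mp hXY, hX, hY]
  rw [uniformOnIcc, aux_prod_smul_smul, Measure.prod_restrict, ← Measure.volume_eq_prod]
  rw [Measure.smul_apply, Measure.restrict_apply hSm]
  -- compute the volume of S ∩ ([0,s] × [0,s])
  set x₀ : ℝ := K / (1 - r) with hx₀def
  have hx₀nn : 0 ≤ x₀ := div_nonneg hKnn hr1'.le
  have hx₀s : x₀ ≤ s := by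
    rw [hx₀def, div_le_iff₀ hr1']
    linarith [hK1]
  have hslice : ∀ x : ℝ, (volume (Prod.mk x ⁻¹' (S ∩ Icc (0:ℝ) s ×ˢ Icc (0:ℝ) s)))
      = (Icc (0:ℝ) s).indicator (fun x => ENNReal.ofReal ((K - (1 - r) * x) / r)) x := by
    intro x
    by_cases hx : x ∈ Icc (0:ℝ) s
    · have : Prod.mk x ⁻¹' (S ∩ Icc (0:ℝ) s ×ˢ Icc (0:ℝ) s)
          = Icc 0 ((K - (1 - r) * x) / r) := by
        ext y
        simp only [hSdef, mem_preimage, mem_inter_iff, mem_setOf_eq, mem_prod, mem_Icc]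
        constructor
        · rintro ⟨h1, _, hy0, _⟩
          refine ⟨hy0, ?_⟩
          rw [le_div_iff₀ hr0]
          linarith
        · rintro ⟨hy0, hy1⟩
          rw [le_div_iff₀ hr0] at hy1
          have hys : y ≤ s := by
            nlinarith [hx.1, hK2]
          exact ⟨by linarith, hx, hy0, hys⟩
      rw [this, Real.volume_Icc, indicator_of_mem hx]
      ring_nf
    · have : Prod.mk x ⁻¹' (S ∩ Icc (0:ℝ) s ×ˢ Icc (0:ℝ) s) = ∅ := by
        ext y
        simp only [mem_preimage, mem_inter_iff, mem_prod, mem_empty_iff_false, iff_false,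
          not_and]
        intro _ hx'
        exact absurd hx' hx
      rw [this, measure_empty, indicator_of_notMem hx]
  have hvol : (volume (S ∩ Icc (0:ℝ) s ×ˢ Icc (0:ℝ) s))
      = ENNReal.ofReal (s ^ 2 * (1 - α)) := by
    rw [Measure.volume_eq_prod, Measure.prod_apply (hSm.inter (measurableSet_Icc.prod measurableSet_Icc))]
    simp_rw [hslice]
    rw [lintegral_indicator measurableSet_Icc _]
    have hsplit : Icc (0:ℝ) s = Icc 0 x₀ ∪ Ioc x₀ s := (Icc_union_Ioc_eq_Icc hx₀nn hx₀s).symm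
    rw [hsplit, lintegral_union measurableSet_Ioc ((Iic_disjoint_Ioc le_rfl).mono Icc_subset_Iic_self le_rfl)]
    have h2 : ∫⁻ x in Ioc x₀ s, ENNReal.ofReal ((K - (1 - r) * x) / r) = 0 := by
      rw [setLIntegral_congr_fun measurableSet_Ioc
        (fun x hx => ?_), lintegral_zero]
      have hx1 : x₀ < x := hx.1
      have : (K - (1 - r) * x) / r ≤ 0 := by
        apply div_nonpos_of_nonpos_of_nonneg _ hr0.le
        rw [hx₀def, div_lt_iff₀ hr1'] at hx1
        nlinarith
      exact ENNReal.ofReal_eq_zero.mpr this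
    have h1 : ∫⁻ x in Icc 0 x₀, ENNReal.ofReal ((K - (1 - r) * x) / r)
        = ENNReal.ofReal (s ^ 2 * (1 - α)) := by
      rw [← ofReal_integral_eq_lintegral_ofReal]
      · congr 1
        rw [MeasureTheory.integral_Icc_eq_integral_Ioc,
          ← intervalIntegral.integral_of_le hx₀nn]
        have hfe : (fun x : ℝ => (K - (1 - r) * x) / r)
            = fun x => K / r - ((1 - r) / r) * x := by
          funext x; ring
        rw [hfe, intervalIntegral.integral_sub intervalIntegrable_const
            (((by fun_prop : Continuous fun x : ℝ => ((1 - r) / r) * x)).intervalIntegrable _ _),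
          intervalIntegral.integral_const, intervalIntegral.integral_const_mul,
          integral_id]
        rw [smul_eq_mul, hx₀def]
        field_simp
        linear_combination hKsq
      · apply Continuous.integrableOn_Icc; fun_prop
      · rw [Filter.EventuallyLE, ae_restrict_iff' measurableSet_Icc]
        apply Filter.Eventually.of_forall
        intro x hx
        have hx1 : x ≤ x₀ := hx.2
        apply div_nonneg _ hr0.le
        rw [hx₀def, le_div_iff₀ hr1'] at hx1
        nlinarith
    rw [h1, h2, add_zero]
  rw [hvol]
  have hso : ENNReal.ofReal s ≠ 0 := by
    simp [hs, ENNReal.ofReal_eq_zero, not_le]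
  have hst : ENNReal.ofReal s ≠ ⊤ := ENNReal.ofReal_ne_top
  rw [show (s:ℝ)^2 * (1 - α) = s * (s * (1-α)) by ring,
    ENNReal.ofReal_mul hs.le, ENNReal.ofReal_mul hs.le, smul_eq_mul]
  calc (ENNReal.ofReal s)⁻¹ * (ENNReal.ofReal s)⁻¹ *
        (ENNReal.ofReal s * (ENNReal.ofReal s * ENNReal.ofReal (1 - α)))
      = ((ENNReal.ofReal s)⁻¹ * ENNReal.ofReal s) * (((ENNReal.ofReal s)⁻¹ * ENNReal.ofReal s)
        * ENNReal.ofReal (1 - α)) := by ring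
    _ = ENNReal.ofReal (1 - α) := by
        rw [ENNReal.inv_mul_cancel hso hst, one_mul, one_mul]
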